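/- Let H be a complex Hilbert space and let γ : H → H be a bounded linear operator satisfying γ∘γ = −I and γ* = −γ (so γ is unitary). Then there exists a closed subspace L ⊆ H with γ(L) = L^⊥ (the orthogonal complement of L) if and only if the eigenspaces ker(γ − i·I) and ker(γ + i·I) are isometrically isomorphic as Hilbert spaces. -/

import Mathlib

section StatementAux
open ContinuousLinearMap
set_option linter.unusedSectionVars false

variable {H : Type*} [NormedAddCommGroup H] [InnerProductSpace ℂ H] [CompleteSpace H]

local notation "⟪" x ", " y "⟫" => @inner ℂ _ _ x y

private lemma aux_memP (γ : H →L[ℂ] H) (x : H) :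
    x ∈ LinearMap.ker ((γ - Complex.I • (1 : H →L[ℂ] H) : H →L[ℂ] H) : H →ₗ[ℂ] H) ↔ γ x = Complex.I • x := by
  simp [LinearMap.mem_ker, ContinuousLinearMap.sub_apply, sub_eq_zero]

private lemma aux_memM (γ : H →L[ℂ] H) (x : H) :
    x ∈ LinearMap.ker ((γ + Complex.I • (1 : H →L[ℂ] H) : H →L[ℂ] H) : H →ₗ[ℂ] H) ↔ γ x = -(Complex.I • x) := by
  simp [LinearMap.mem_ker, ContinuousLinearMap.add_apply, add_eq_zero_iff_eq_neg]

private lemma aux_gamma_sq (γ : H →L[ℂ] H) (hsq : γ ∘L γ = -1) (x : H) : γ (γ x) = -x := by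
  have := ContinuousLinearMap.ext_iff.mp hsq x
  simpa using this

private lemma aux_inner_gamma (γ : H →L[ℂ] H)
    (hadj : ContinuousLinearMap.adjoint γ = -γ) (x y : H) :
    ⟪γ x, y⟫ = -⟪x, γ y⟫ := by
  rw [← ContinuousLinearMap.adjoint_inner_right γ x y, hadj]
  simp [inner_neg_right]

private lemma aux_orth (γ : H →L[ℂ] H)
    (hadj : ContinuousLinearMap.adjoint γ = -γ) {u v : H}
    (hu : γ u = Complex.I • u) (hv : γ v = -(Complex.I • v)) : ⟪u, v⟫ = 0 := by
  have h := aux_inner_gamma γ hadj u v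
  rw [hu, hv] at h
  simp only [inner_smul_left, inner_neg_right, inner_smul_right, Complex.conj_I, neg_neg] at h
  have h2 : (2 * Complex.I) * ⟪u, v⟫ = 0 := by linear_combination -h
  rcases mul_eq_zero.mp h2 with h3 | h3
  · exact absurd h3 (by simp [Complex.I_ne_zero])
  · exact h3

private lemma aux_p_mem (γ : H →L[ℂ] H) (hsq : γ ∘L γ = -1) (x : H) :
    γ ((2⁻¹ : ℂ) • (x - Complex.I • γ x)) =
      Complex.I • ((2⁻¹ : ℂ) • (x - Complex.I • γ x)) := by
  have h2 := aux_gamma_sq γ hsq x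
  simp only [map_smul, map_sub, h2]
  match_scalars <;> (try ring_nf) <;> (try simp [Complex.I_sq]) <;> (try norm_num)

private lemma aux_m_mem (γ : H →L[ℂ] H) (hsq : γ ∘L γ = -1) (x : H) :
    γ ((2⁻¹ : ℂ) • (x + Complex.I • γ x)) =
      -(Complex.I • ((2⁻¹ : ℂ) • (x + Complex.I • γ x))) := by
  have h2 := aux_gamma_sq γ hsq x
  simp only [map_smul, map_add, h2]
  match_scalars <;> (try ring_nf) <;> (try simp [Complex.I_sq]) <;> (try norm_num)

private lemma aux_p_add_m (x : H) (γ : H →L[ℂ] H) :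
    (2⁻¹ : ℂ) • (x - Complex.I • γ x) + (2⁻¹ : ℂ) • (x + Complex.I • γ x) = x := by
  match_scalars <;> (try ring_nf) <;> (try simp [Complex.I_sq]) <;> (try norm_num)

end StatementAux

set_option maxHeartbeats 2000000 in
/-- Let `H` be a complex Hilbert space and `γ : H → H` a bounded operator
with `γ ∘ γ = -I` and `γ* = -γ`.  Then there exists a closed subspace `L ⊆ H` with
`γ(L) = L^⊥` if and only if the eigenspaces `ker (γ - i)` and `ker (γ + i)` are
isometrically isomorphic. -/
theorem statement0 {H : Type*} [NormedAddCommGroup H] [InnerProductSpace ℂ H]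
    [CompleteSpace H] (γ : H →L[ℂ] H)
    (hsq : γ ∘L γ = -1)
    (hadj : ContinuousLinearMap.adjoint γ = -γ) :
    (∃ L : Submodule ℂ H, IsClosed (L : Set H) ∧ L.map (γ : H →ₗ[ℂ] H) = Lᗮ) ↔
      Nonempty
        ((LinearMap.ker ((γ - Complex.I • (1 : H →L[ℂ] H) : H →L[ℂ] H) : H →ₗ[ℂ] H)) ≃ₗᵢ[ℂ]
          (LinearMap.ker ((γ + Complex.I • (1 : H →L[ℂ] H) : H →L[ℂ] H) : H →ₗ[ℂ] H))) := by
  constructor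
  · -- Forward direction
    rintro ⟨L, hLc, hLγ⟩
    haveI : CompleteSpace L := hLc.completeSpace_coe
    set P : H →L[ℂ] H := L.subtypeL ∘L Submodule.orthogonalProjection L with hP
    have hPmem : ∀ z : H, P z ∈ L := fun z => (Submodule.orthogonalProjection L z).2
    have hPsub : ∀ z : H, z - P z ∈ Lᗮ := fun z =>
      Submodule.sub_starProjection_mem_orthogonal (K := L) z
    have hPL : ∀ z ∈ L, P z = z := by
      intro z hz
      have : Submodule.orthogonalProjection L (⟨z, hz⟩ : L) = ⟨z, hz⟩ :=
        Submodule.orthogonalProjection_mem_subspace_eq_self _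
      simpa [hP] using congrArg (Subtype.val) this
    have hPO : ∀ z ∈ Lᗮ, P z = 0 := by
      intro z hz
      have : Submodule.orthogonalProjection L z = 0 :=
        Submodule.orthogonalProjectionOnto_apply_of_mem_orthogonal hz
      simp [hP, this]
    have hγL : ∀ z ∈ L, γ z ∈ Lᗮ := by
      intro z hz
      rw [← hLγ]
      exact Submodule.mem_map_of_mem hz
    have hγLperp : ∀ z ∈ Lᗮ, γ z ∈ L := by
      intro z hz
      rw [← hLγ] at hz
      obtain ⟨w, hw, rfl⟩ := hz
      rw [ContinuousLinearMap.coe_coe, aux_gamma_sq γ hsq w]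
      exact L.neg_mem hw
    set U : H →L[ℂ] H := (2 : ℂ) • P - 1 with hU
    have hUapp : ∀ z : H, U z = P z - (z - P z) := by
      intro z
      simp only [hU, ContinuousLinearMap.sub_apply, ContinuousLinearMap.smul_apply,
        ContinuousLinearMap.one_apply]
      module
    have hanti : ∀ z : H, U (γ z) = -γ (U z) := by
      intro z
      have hPz : P (γ z) = γ z - γ (P z) := by
        have h1 : γ z = γ (P z) + γ (z - P z) := by rw [← map_add]; congr 1; abel
        rw [h1, map_add, hPO _ (hγL _ (hPmem z)), zero_add,
          hPL _ (hγLperp _ (hPsub z)), map_sub]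
        abel
      rw [hUapp, hUapp, hPz]
      simp only [map_sub]
      abel
    have hUmemM : ∀ x : H, x ∈ LinearMap.ker ((γ - Complex.I • (1 : H →L[ℂ] H) : H →L[ℂ] H) : H →ₗ[ℂ] H) →
        U x ∈ LinearMap.ker ((γ + Complex.I • (1 : H →L[ℂ] H) : H →L[ℂ] H) : H →ₗ[ℂ] H) := by
      intro x hx
      rw [aux_memP γ x] at hx
      rw [aux_memM γ]
      have h := hanti x
      rw [hx, map_smul] at h
      rw [h, neg_neg]
    have hUmemP : ∀ x : H, x ∈ LinearMap.ker ((γ + Complex.I • (1 : H →L[ℂ] H) : H →L[ℂ] H) : H →ₗ[ℂ] H) →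
        U x ∈ LinearMap.ker ((γ - Complex.I • (1 : H →L[ℂ] H) : H →L[ℂ] H) : H →ₗ[ℂ] H) := by
      intro x hx
      rw [aux_memM γ x] at hx
      rw [aux_memP γ]
      have h := hanti x
      rw [hx, map_neg, map_smul] at h
      exact (neg_inj.mp h).symm
    have hPP : ∀ z : H, P (P z) = P z := fun z => hPL _ (hPmem z)
    have hUapp2 : ∀ z : H, U z = (2 : ℂ) • P z - z := by
      intro z
      simp [hU]
    have hPU : ∀ z : H, P (U z) = P z := by
      intro z
      rw [hUapp2, map_sub, map_smul, hPP, two_smul]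
      abel
    have hUU : ∀ z : H, U (U z) = z := by
      intro z
      rw [hUapp2 (U z), hPU, hUapp2]
      module
    have hUnorm : ∀ z : H, ‖U z‖ = ‖z‖ := by
      intro z
      have hab : (inner ℂ (P z) (z - P z) : ℂ) = 0 :=
        (Submodule.mem_orthogonal L _).mp (hPsub z) (P z) (hPmem z)
      have h1 : ‖P z + (z - P z)‖ * ‖P z + (z - P z)‖ = ‖P z‖ * ‖P z‖ + ‖z - P z‖ * ‖z - P z‖ :=
        norm_add_sq_eq_norm_sq_add_norm_sq_of_inner_eq_zero _ _ hab
      have hab2 : (inner ℂ (P z) (-(z - P z)) : ℂ) = 0 := by rw [inner_neg_right, hab, neg_zero]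
      have h2 : ‖P z + -(z - P z)‖ * ‖P z + -(z - P z)‖ = ‖P z‖ * ‖P z‖ + ‖z - P z‖ * ‖z - P z‖ := by
        rw [norm_add_sq_eq_norm_sq_add_norm_sq_of_inner_eq_zero _ _ hab2, norm_neg]
      have hz : z = P z + (z - P z) := by abel
      have hu : U z = P z + -(z - P z) := by rw [hUapp z]; abel
      have hsq' : ‖U z‖ * ‖U z‖ = ‖z‖ * ‖z‖ := by rw [hu, h2, ← h1, ← hz]
      calc ‖U z‖ = Real.sqrt (‖U z‖ * ‖U z‖) := (Real.sqrt_mul_self (norm_nonneg _)).symm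
        _ = Real.sqrt (‖z‖ * ‖z‖) := by rw [hsq']
        _ = ‖z‖ := Real.sqrt_mul_self (norm_nonneg _)
    refine ⟨LinearIsometryEquiv.ofSurjective
      ⟨{ toFun := fun x => ⟨U x, hUmemM x x.2⟩
         map_add' := by intro x y; ext; exact map_add U (x : H) y
         map_smul' := by intro c x; ext; exact map_smul U c (x : H) }, ?_⟩ ?_⟩
    · intro x
      exact hUnorm x
    · intro y
      refine ⟨⟨U y, hUmemP _ y.2⟩, ?_⟩
      ext
      exact hUU y
  · -- Backward direction
    rintro ⟨e⟩
    set Ep := LinearMap.ker ((γ - Complex.I • (1 : H →L[ℂ] H) : H →L[ℂ] H) : H →ₗ[ℂ] H) with hEp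
    set Em := LinearMap.ker ((γ + Complex.I • (1 : H →L[ℂ] H) : H →L[ℂ] H) : H →ₗ[ℂ] H) with hEm
    haveI : CompleteSpace Ep := (ContinuousLinearMap.isClosed_ker _).completeSpace_coe
    haveI : CompleteSpace Em := (ContinuousLinearMap.isClosed_ker _).completeSpace_coe
    set ec : Ep →L[ℂ] Em := e.toLinearIsometry.toContinuousLinearMap with hec
    set g : Ep →L[ℂ] H := Ep.subtypeL + Em.subtypeL.comp ec with hg
    have hgapp : ∀ u : Ep, g u = (u : H) + ((e u : Em) : H) := by
      intro u
      simp [hg, hec]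
    set L : Submodule ℂ H := LinearMap.range (g : Ep →ₗ[ℂ] H) with hL
    have mem_L : ∀ z : H, z ∈ L ↔ ∃ u : Ep, (u : H) + ((e u : Em) : H) = z := by
      intro z
      simp only [hL, LinearMap.mem_range]
      constructor
      · rintro ⟨u, rfl⟩; exact ⟨u, (hgapp u).symm⟩
      · rintro ⟨u, rfl⟩; exact ⟨u, hgapp u⟩
    have horth : ∀ (u : Ep) (v : Em), (inner ℂ ((u : H)) ((v : H)) : ℂ) = 0 := by
      intro u v
      exact aux_orth γ hadj ((aux_memP γ _).mp u.2) ((aux_memM γ _).mp v.2)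
    have horth' : ∀ (u : Ep) (v : Em), (inner ℂ ((v : H)) ((u : H)) : ℂ) = 0 := by
      intro u v
      rw [← inner_conj_symm, horth u v, map_zero]
    have hinner_e : ∀ u v : Ep,
        (inner ℂ ((e u : Em) : H) ((e v : Em) : H) : ℂ) = inner ℂ (u : H) (v : H) := by
      intro u v
      have h1 : (inner ℂ (e u) (e v) : ℂ) = inner ℂ u v := e.inner_map_map u v
      rwa [Submodule.coe_inner, Submodule.coe_inner] at h1
    have hnorm2 : ∀ u : Ep, ‖g u‖ * ‖g u‖ = 2 * (‖u‖ * ‖u‖) := by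
      intro u
      have h := norm_add_sq_eq_norm_sq_add_norm_sq_of_inner_eq_zero
        ((u : H)) (((e u : Em)) : H) (horth u (e u))
      rw [hgapp, h]
      have h1 : ‖((e u : Em) : H)‖ = ‖u‖ := by
        rw [show ‖((e u : Em) : H)‖ = ‖e u‖ from rfl, e.norm_map]
      have h2 : ‖(u : H)‖ = ‖u‖ := rfl
      rw [h1, h2]
      ring
    have hclosed : IsClosed (L : Set H) := by
      have hantil : AntilipschitzWith 1 g := by
        refine AntilipschitzWith.of_le_mul_dist fun x y => ?_
        rw [dist_eq_norm, dist_eq_norm, ← map_sub]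
        have h2 := hnorm2 (x - y)
        have h3 : ‖x - y‖ * ‖x - y‖ ≤ ‖g (x - y)‖ * ‖g (x - y)‖ := by
          nlinarith [mul_self_nonneg ‖x - y‖]
        have := norm_nonneg (g (x - y))
        have := norm_nonneg (x - y)
        push_cast
        nlinarith [sq_nonneg (‖x - y‖ - ‖g (x - y)‖), sq_nonneg (‖x - y‖ + ‖g (x - y)‖)]
      have hr := hantil.isClosed_range g.uniformContinuous
      have : (L : Set H) = Set.range g := by
        rw [hL]
        exact LinearMap.coe_range _
      rw [this]
      exact hr
    refine ⟨L, hclosed, le_antisymm ?_ ?_⟩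
    · -- γ L ≤ Lᗮ
      rintro w ⟨z, hz, rfl⟩
      obtain ⟨u, rfl⟩ := (mem_L z).mp hz
      rw [Submodule.mem_orthogonal]
      intro y hy
      obtain ⟨v, rfl⟩ := (mem_L y).mp hy
      have hu : γ (u : H) = Complex.I • (u : H) := (aux_memP γ _).mp u.2
      have heu : γ ((e u : Em) : H) = -(Complex.I • ((e u : Em) : H)) :=
        (aux_memM γ _).mp (e u).2
      rw [map_add, ContinuousLinearMap.coe_coe, hu, heu]
      rw [inner_add_left, inner_add_right, inner_add_right]
      rw [inner_smul_right, inner_smul_right, inner_neg_right, inner_smul_right,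
        inner_neg_right, inner_smul_right]
      rw [horth v (e u), horth' u (e v), hinner_e v u]
      ring
    · -- Lᗮ ≤ γ L
      intro w hw
      set a : H := (2⁻¹ : ℂ) • (w - Complex.I • γ w) with ha
      set b : H := (2⁻¹ : ℂ) • (w + Complex.I • γ w) with hb
      have hamem : a ∈ Ep := (aux_memP γ _).mpr (aux_p_mem γ hsq w)
      have hbmem : b ∈ Em := (aux_memM γ _).mpr (aux_m_mem γ hsq w)
      have hab : a + b = w := aux_p_add_m w γ
      set a' : Ep := ⟨a, hamem⟩ with ha'
      set b' : Em := ⟨b, hbmem⟩ with hb'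
      have hkey : ∀ u : Ep, (inner ℂ ((u : H)) ((a' : H) + ((e.symm b' : Ep) : H)) : ℂ) = 0 := by
        intro u
        have h0 : (inner ℂ ((u : H) + ((e u : Em) : H)) w : ℂ) = 0 :=
          (Submodule.mem_orthogonal L w).mp hw _ ((mem_L _).mpr ⟨u, rfl⟩)
        rw [← hab, inner_add_left, inner_add_right, inner_add_right] at h0
        rw [horth u b', horth' a' (e u)] at h0
        have h1 : (inner ℂ ((e u : Em) : H) (b : H) : ℂ) = inner ℂ (u : H) ((e.symm b' : Ep) : H) := by
          have : ((b : H)) = ((e (e.symm b') : Em) : H) := by rw [e.apply_symm_apply]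
          rw [this, hinner_e u (e.symm b')]
        rw [h1] at h0
        rw [inner_add_right]
        simpa using h0
      have hc : (a' : H) + ((e.symm b' : Ep) : H) = 0 := by
        have hmem : (a' : H) + ((e.symm b' : Ep) : H) ∈ Ep := Ep.add_mem a'.2 (e.symm b').2
        have := hkey ⟨_, hmem⟩
        rw [← inner_self_eq_zero (𝕜 := ℂ)]
        exact this
      have hba : b' = -(e a') := by
        have h1 : (e.symm b' : Ep) = -a' := by
          apply Subtype.ext
          have : ((e.symm b' : Ep) : H) = -(a' : H) := by
            rw [eq_neg_iff_add_eq_zero, add_comm]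
            exact hc
          simpa using this
        rw [← e.apply_symm_apply b', h1, map_neg]
      set u₀ : Ep := -(Complex.I • a') with hu₀
      refine Submodule.mem_map.mpr ⟨(u₀ : H) + ((e u₀ : Em) : H), (mem_L _).mpr ⟨u₀, rfl⟩, ?_⟩
      have hu0coe : (u₀ : H) = -(Complex.I • a) := by simp [hu₀, ha']
      have heu0 : ((e u₀ : Em) : H) = -(Complex.I • ((e a' : Em) : H)) := by
        rw [hu₀, map_neg, map_smul]
        simp
      have hγu0 : γ (u₀ : H) = Complex.I • (u₀ : H) := (aux_memP γ _).mp u₀.2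
      have hγeu0 : γ ((e u₀ : Em) : H) = -(Complex.I • ((e u₀ : Em) : H)) :=
        (aux_memM γ _).mp (e u₀).2
      rw [map_add, ContinuousLinearMap.coe_coe, hγu0, hγeu0, hu0coe, heu0]
      have hbcoe : (b : H) = -(((e a' : Em) : H)) := by
        have := congrArg (Subtype.val) hba
        simpa using this
      rw [← hab, hbcoe]
      simp only [smul_neg, smul_smul, Complex.I_mul_I, neg_smul, one_smul, neg_neg]
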